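/- Let f₀ ∈ L¹(ℝ²) ∩ L^∞(ℝ²) and define C(s) = min{ (√3/(2π))(1−e^{−s})^{−2}, e^{2s} } for s > 0. Then the self-similar solution satisfies ‖g̃(s)‖_{L^∞(ℝ²)} ≤ C(s) max{‖f₀‖_{L¹}, ‖f₀‖_{L^∞}}, and in particular C is bounded on [s₀, ∞) for each s₀ > 0 while C(s) = e^{2s} for small s (the two branches cross where e^{2s}(1−e^{−s})² = √3/(2π)). -/

import Mathlib

open Real MeasureTheory

/-- The Kolmogorov kernel in Lagrangian variables. -/
noncomputable def G (t v z : ℝ) : ℝ :=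
  (Real.sqrt 3 / (2 * Real.pi * t ^ 2)) *
    Real.exp (-(1 / (4 * t ^ 3)) * (3 * z ^ 2 + (2 * t * v - 3 * z) ^ 2))

/-- The solution of the Lagrangian Kolmogorov equation: `g(t) = G_t * f₀`. -/
noncomputable def sol (f₀ : ℝ × ℝ → ℝ) (t v z : ℝ) : ℝ :=
  ∫ y : ℝ × ℝ, G t (v - y.1) (z - y.2) * f₀ y

/-- The self-similar solution. -/
noncomputable def tg (f₀ : ℝ × ℝ → ℝ) (s v z : ℝ) : ℝ :=
  Real.exp (2 * s) * sol f₀ (Real.exp s - 1) (Real.exp (s / 2) * v) (Real.exp (3 * s / 2) * z)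

/-- The bounding constant `C(s) = min{(√3/(2π))(1−e^{−s})^{−2}, e^{2s}}`. -/
noncomputable def Cbound (s : ℝ) : ℝ :=
  min (Real.sqrt 3 / (2 * Real.pi) * ((1 - Real.exp (-s)) ^ 2)⁻¹) (Real.exp (2 * s))

lemma G_nonneg (t v z : ℝ) : 0 ≤ G t v z := by
  unfold G; positivity

lemma G_le {t : ℝ} (ht : 0 < t) (v z : ℝ) :
    G t v z ≤ Real.sqrt 3 / (2 * Real.pi * t ^ 2) := by
  unfold G
  have h1 : Real.exp (-(1 / (4 * t ^ 3)) * (3 * z ^ 2 + (2 * t * v - 3 * z) ^ 2)) ≤ 1 := by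
    apply Real.exp_le_one_iff.mpr
    have : (0:ℝ) ≤ (1 / (4 * t ^ 3)) * (3 * z ^ 2 + (2 * t * v - 3 * z) ^ 2) := by positivity
    linarith
  have hc : (0:ℝ) ≤ Real.sqrt 3 / (2 * Real.pi * t ^ 2) := by positivity
  calc _ ≤ Real.sqrt 3 / (2 * Real.pi * t ^ 2) * 1 := by
        exact mul_le_mul_of_nonneg_left h1 hc
    _ = _ := mul_one _

lemma G_cont (t : ℝ) : Continuous (fun p : ℝ × ℝ => G t p.1 p.2) := by
  unfold G; fun_prop

lemma G_integrable {t : ℝ} (ht : 0 < t) :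
    Integrable (fun p : ℝ × ℝ => G t p.1 p.2) volume := by
  have hb1 : (0:ℝ) < 1 / (4 * t ^ 3) * t ^ 2 / 3 := by positivity
  have hb2 : (0:ℝ) < 1 / (4 * t ^ 3) := by positivity
  have hmaj : Integrable (fun p : ℝ × ℝ =>
      (Real.sqrt 3 / (2 * Real.pi * t ^ 2) *
        Real.exp (-(1 / (4 * t ^ 3) * t ^ 2 / 3) * p.1 ^ 2)) *
        Real.exp (-(1 / (4 * t ^ 3)) * p.2 ^ 2)) volume := by
    rw [Measure.volume_eq_prod]
    exact ((integrable_exp_neg_mul_sq hb1).const_mul _).mul_prod (integrable_exp_neg_mul_sq hb2)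
  refine hmaj.mono (G_cont t).aestronglyMeasurable (.of_forall fun p => ?_)
  obtain ⟨v, z⟩ := p
  simp only
  rw [Real.norm_of_nonneg (G_nonneg t v z), Real.norm_of_nonneg (by positivity)]
  unfold G
  rw [mul_assoc (Real.sqrt 3 / (2 * Real.pi * t ^ 2)), ← Real.exp_add]
  apply mul_le_mul_of_nonneg_left _ (by positivity)
  apply Real.exp_le_exp.mpr
  have hA : (0:ℝ) < 1 / (4 * t ^ 3) := hb2
  have hq : t ^ 2 / 3 * v ^ 2 + z ^ 2 ≤ 3 * z ^ 2 + (2 * t * v - 3 * z) ^ 2 := by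
    nlinarith [sq_nonneg (11 * z - 6 * t * v), sq_nonneg (t * v)]
  nlinarith [mul_le_mul_of_nonneg_left hq hA.le]

lemma G_integral {t : ℝ} (ht : 0 < t) :
    ∫ p : ℝ × ℝ, G t p.1 p.2 = 1 := by
  have hint := G_integrable ht
  rw [Measure.volume_eq_prod] at hint ⊢
  rw [integral_prod _ hint]
  have hin : ∀ v : ℝ, (∫ z : ℝ, G t v z) =
      (Real.sqrt 3 / (2 * Real.pi * t ^ 2) * Real.exp (-(1 / (4 * t ^ 3) * t ^ 2) * v ^ 2)) *
        Real.sqrt (Real.pi / (12 * (1 / (4 * t ^ 3)))) := by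
    intro v
    have key : ∀ z : ℝ, G t v z =
        (Real.sqrt 3 / (2 * Real.pi * t ^ 2) * Real.exp (-(1 / (4 * t ^ 3) * t ^ 2) * v ^ 2)) *
          Real.exp (-(12 * (1 / (4 * t ^ 3))) * (z + -(t * v / 2)) ^ 2) := by
      intro z
      calc G t v z = Real.sqrt 3 / (2 * Real.pi * t ^ 2) *
            Real.exp ((-(1 / (4 * t ^ 3) * t ^ 2) * v ^ 2) +
              (-(12 * (1 / (4 * t ^ 3))) * (z + -(t * v / 2)) ^ 2)) := by
            unfold G; congr 1; ring
        _ = _ := by rw [Real.exp_add]; ring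
    simp_rw [key]
    rw [integral_const_mul,
      integral_add_right_eq_self (fun u : ℝ => Real.exp (-(12 * (1 / (4 * t ^ 3))) * u ^ 2)) _,
      integral_gaussian]
  simp_rw [hin]
  rw [integral_mul_const, integral_const_mul, integral_gaussian]
  have e1 : Real.pi / (12 * (1 / (4 * t ^ 3))) = Real.pi * t ^ 3 / 3 := by
    field_simp; ring
  have e2 : Real.pi / (1 / (4 * t ^ 3) * t ^ 2) = 4 * Real.pi * t := by
    field_simp
  rw [e1, e2]
  rw [mul_assoc, ← Real.sqrt_mul (by positivity)]
  have e3 : 4 * Real.pi * t * (Real.pi * t ^ 3 / 3) = (2 * Real.pi * t ^ 2 / Real.sqrt 3) ^ 2 := by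
    rw [div_pow, mul_pow, mul_pow, Real.sq_sqrt (by norm_num : (0:ℝ) ≤ 3)]
    ring
  rw [e3, Real.sqrt_sq (by positivity)]
  have h3 : Real.sqrt 3 ≠ 0 := by positivity
  field_simp

lemma sol_le_one {f₀ : ℝ × ℝ → ℝ} {t : ℝ} (ht : 0 < t)
    (hfInf : MemLp f₀ ⊤ volume) (v z : ℝ) :
    ‖sol f₀ t v z‖ ≤ (eLpNorm f₀ ⊤ volume).toReal := by
  set NI := (eLpNorm f₀ ⊤ volume).toReal with hNI
  have hae : ∀ᵐ y : ℝ × ℝ, ‖f₀ y‖ ≤ NI := by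
    have h := ae_le_eLpNormEssSup (f := f₀) (μ := volume)
    have hne : eLpNormEssSup f₀ volume ≠ ⊤ := by
      rw [← eLpNorm_exponent_top]; exact hfInf.2.ne
    filter_upwards [h] with y hy
    calc ‖f₀ y‖ = ((‖f₀ y‖₊ : ENNReal)).toReal := by simp
      _ ≤ (eLpNormEssSup f₀ volume).toReal := ENNReal.toReal_mono hne hy
      _ = NI := by rw [hNI, eLpNorm_exponent_top]
  have hGint : Integrable (fun y : ℝ × ℝ => G t ((v, z) - y).1 ((v, z) - y).2 * NI) volume :=
    (((G_integrable ht).comp_sub_left (v, z)).mul_const NI)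
  calc ‖sol f₀ t v z‖ ≤ ∫ y : ℝ × ℝ, ‖G t (v - y.1) (z - y.2) * f₀ y‖ :=
        norm_integral_le_integral_norm _
    _ ≤ ∫ y : ℝ × ℝ, G t ((v, z) - y).1 ((v, z) - y).2 * NI := by
        refine integral_mono_of_nonneg (.of_forall fun y => norm_nonneg _) hGint ?_
        filter_upwards [hae] with y hy
        simp only [Prod.fst_sub, Prod.snd_sub]
        rw [norm_mul, Real.norm_of_nonneg (G_nonneg _ _ _)]
        exact mul_le_mul_of_nonneg_left hy (G_nonneg _ _ _)
    _ = (∫ y : ℝ × ℝ, G t ((v, z) - y).1 ((v, z) - y).2) * NI := integral_mul_const _ _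
    _ = 1 * NI := by
        rw [integral_sub_left_eq_self (fun p : ℝ × ℝ => G t p.1 p.2) volume (v, z),
          G_integral ht]
    _ = NI := one_mul _

lemma sol_le_two {f₀ : ℝ × ℝ → ℝ} {t : ℝ} (ht : 0 < t)
    (hf₁ : MemLp f₀ 1 volume) (v z : ℝ) :
    ‖sol f₀ t v z‖ ≤ Real.sqrt 3 / (2 * Real.pi * t ^ 2) * (eLpNorm f₀ 1 volume).toReal := by
  have hf : Integrable f₀ volume := memLp_one_iff_integrable.mp hf₁
  have hN1 : ∫ y : ℝ × ℝ, ‖f₀ y‖ = (eLpNorm f₀ 1 volume).toReal := by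
    rw [eLpNorm_one_eq_lintegral_enorm, integral_norm_eq_lintegral_enorm hf.1]
  calc ‖sol f₀ t v z‖ ≤ ∫ y : ℝ × ℝ, ‖G t (v - y.1) (z - y.2) * f₀ y‖ :=
        norm_integral_le_integral_norm _
    _ ≤ ∫ y : ℝ × ℝ, Real.sqrt 3 / (2 * Real.pi * t ^ 2) * ‖f₀ y‖ := by
        refine integral_mono_of_nonneg (.of_forall fun y => norm_nonneg _)
          (hf.norm.const_mul _) (.of_forall fun y => ?_)
        simp only
        rw [norm_mul, Real.norm_of_nonneg (G_nonneg _ _ _)]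
        exact mul_le_mul_of_nonneg_right (G_le ht _ _) (norm_nonneg _)
    _ = Real.sqrt 3 / (2 * Real.pi * t ^ 2) * (eLpNorm f₀ 1 volume).toReal := by
        rw [integral_const_mul, hN1]

/-- If `f₀ ∈ L¹ ∩ L^∞`, then `‖g̃(s)‖_∞ ≤ C(s) max{‖f₀‖₁, ‖f₀‖_∞}`; moreover `C` is
bounded on `[s₀,∞)` for every `s₀ > 0`, while `C(s) = e^{2s}` for small `s > 0`. -/
theorem stmt_19 (f₀ : ℝ × ℝ → ℝ)
    (hf₁ : MemLp f₀ 1 volume) (hfInf : MemLp f₀ ⊤ volume) :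
    (∀ s : ℝ, 0 < s →
      eLpNorm (fun x : ℝ × ℝ => tg f₀ s x.1 x.2) ⊤ volume
        ≤ ENNReal.ofReal (Cbound s *
            max (eLpNorm f₀ 1 volume).toReal (eLpNorm f₀ ⊤ volume).toReal))
    ∧ (∀ s₀ : ℝ, 0 < s₀ → ∃ M : ℝ, ∀ s : ℝ, s₀ ≤ s → Cbound s ≤ M)
    ∧ (∃ ε : ℝ, 0 < ε ∧ ∀ s : ℝ, 0 < s → s < ε → Cbound s = Real.exp (2 * s)) := by
  set N1 := (eLpNorm f₀ 1 volume).toReal with hN1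
  set NI := (eLpNorm f₀ ⊤ volume).toReal with hNI
  have hN1nn : 0 ≤ N1 := ENNReal.toReal_nonneg
  have hNInn : 0 ≤ NI := ENNReal.toReal_nonneg
  refine ⟨?_, ?_, ?_⟩
  · intro s hs
    set t := Real.exp s - 1 with ht_def
    have ht : 0 < t := by
      have : (1:ℝ) < Real.exp s := by
        calc (1:ℝ) = Real.exp 0 := Real.exp_zero.symm
          _ < Real.exp s := Real.exp_lt_exp.mpr hs
      simpa [ht_def] using this
    have hB1 : Real.exp (2 * s) * (Real.sqrt 3 / (2 * Real.pi * t ^ 2)) =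
        Real.sqrt 3 / (2 * Real.pi) * ((1 - Real.exp (-s)) ^ 2)⁻¹ := by
      have hE : (0:ℝ) < Real.exp s := Real.exp_pos s
      have hE1 : 1 - Real.exp (-s) = t / Real.exp s := by
        rw [Real.exp_neg, ht_def]; field_simp
      rw [hE1, two_mul, Real.exp_add, div_pow, inv_div]
      field_simp
    rw [eLpNorm_exponent_top]
    apply eLpNormEssSup_le_of_ae_bound (C := Cbound s * max N1 NI)
    refine Filter.Eventually.of_forall fun x => ?_
    have hsol1 := sol_le_two ht hf₁ (Real.exp (s / 2) * x.1) (Real.exp (3 * s / 2) * x.2)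
    have hsol2 := sol_le_one ht hfInf (Real.exp (s / 2) * x.1) (Real.exp (3 * s / 2) * x.2)
    have hnorm : ‖tg f₀ s x.1 x.2‖ = Real.exp (2 * s) *
        ‖sol f₀ t (Real.exp (s / 2) * x.1) (Real.exp (3 * s / 2) * x.2)‖ := by
      rw [tg, norm_mul, Real.norm_of_nonneg (Real.exp_pos _).le, ← ht_def]
    rw [hnorm, Cbound, min_mul_of_nonneg _ _ (le_max_of_le_left hN1nn)]
    apply le_min
    · calc Real.exp (2 * s) * ‖sol f₀ t _ _‖
          ≤ Real.exp (2 * s) * (Real.sqrt 3 / (2 * Real.pi * t ^ 2) * N1) :=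
            mul_le_mul_of_nonneg_left hsol1 (Real.exp_pos _).le
        _ = Real.exp (2 * s) * (Real.sqrt 3 / (2 * Real.pi * t ^ 2)) * N1 :=
            (mul_assoc _ _ _).symm
        _ = Real.sqrt 3 / (2 * Real.pi) * ((1 - Real.exp (-s)) ^ 2)⁻¹ * N1 := by rw [hB1]
        _ ≤ Real.sqrt 3 / (2 * Real.pi) * ((1 - Real.exp (-s)) ^ 2)⁻¹ * max N1 NI := by
            apply mul_le_mul_of_nonneg_left (le_max_left _ _) (by positivity)
    · calc Real.exp (2 * s) * ‖sol f₀ t _ _‖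
          ≤ Real.exp (2 * s) * NI := mul_le_mul_of_nonneg_left hsol2 (Real.exp_pos _).le
        _ ≤ Real.exp (2 * s) * max N1 NI :=
            mul_le_mul_of_nonneg_left (le_max_right _ _) (Real.exp_pos _).le
  · intro s₀ hs₀
    refine ⟨Real.sqrt 3 / (2 * Real.pi) * ((1 - Real.exp (-s₀)) ^ 2)⁻¹, fun s hs => ?_⟩
    have h0 : 0 < 1 - Real.exp (-s₀) := by
      have : Real.exp (-s₀) < 1 := by
        calc Real.exp (-s₀) < Real.exp 0 := Real.exp_lt_exp.mpr (by linarith)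
          _ = 1 := Real.exp_zero
      linarith
    have h1 : 1 - Real.exp (-s₀) ≤ 1 - Real.exp (-s) := by
      have := Real.exp_le_exp.mpr (neg_le_neg hs)
      linarith
    calc Cbound s ≤ Real.sqrt 3 / (2 * Real.pi) * ((1 - Real.exp (-s)) ^ 2)⁻¹ :=
          min_le_left _ _
      _ ≤ Real.sqrt 3 / (2 * Real.pi) * ((1 - Real.exp (-s₀)) ^ 2)⁻¹ := by
          apply mul_le_mul_of_nonneg_left _ (by positivity)
          apply inv_anti₀ (by positivity)
          exact pow_le_pow_left₀ h0.le h1 2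
  · refine ⟨1 / 5, by norm_num, fun s hs hs' => ?_⟩
    have hE : (0:ℝ) < Real.exp s := Real.exp_pos s
    have hlow : 1 - s ≤ Real.exp (-s) := by
      have := Real.add_one_le_exp (-s)
      linarith
    have h1s : (0:ℝ) < 1 - s := by linarith
    have hup : Real.exp s ≤ (1 - s)⁻¹ := by
      rw [← inv_inv (Real.exp s), ← Real.exp_neg]
      exact inv_anti₀ (by positivity) hlow
    have h54 : (1 - s : ℝ)⁻¹ ≤ 5 / 4 := by
      rw [inv_le_iff_one_le_mul₀ h1s] <;> nlinarith
    have h4 : Real.exp s - 1 ≤ 1 / 4 := by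
      have := hup.trans h54; linarith
    have h1le : (1:ℝ) ≤ Real.exp s := Real.one_le_exp hs.le
    have hsq : (Real.exp s - 1) ^ 2 ≤ 1 / 16 := by nlinarith
    have hkey : (Real.exp s - 1) ^ 2 ≤ Real.sqrt 3 / (2 * Real.pi) := by
      have hsqrt : (1:ℝ) ≤ Real.sqrt 3 := by
        rw [show (1:ℝ) = Real.sqrt 1 from (Real.sqrt_one).symm]
        exact Real.sqrt_le_sqrt (by norm_num)
      have hpi : Real.pi ≤ 4 := Real.pi_le_four
      have hpos : (0:ℝ) < 2 * Real.pi := by positivity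
      have : (1:ℝ) / 16 ≤ Real.sqrt 3 / (2 * Real.pi) := by
        rw [div_le_div_iff₀ (by norm_num) hpos]
        nlinarith
      linarith
    have hprod : Real.exp (2 * s) * (1 - Real.exp (-s)) ^ 2 = (Real.exp s - 1) ^ 2 := by
      rw [Real.exp_neg, two_mul, Real.exp_add]
      field_simp
    have hb : (0:ℝ) < (1 - Real.exp (-s)) ^ 2 := by
      have : Real.exp (-s) < 1 := by
        calc Real.exp (-s) < Real.exp 0 := Real.exp_lt_exp.mpr (by linarith)
          _ = 1 := Real.exp_zero
      have h0 : (0:ℝ) < 1 - Real.exp (-s) := by linarith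
      exact pow_pos h0 2
    rw [Cbound, min_eq_right]
    rw [← div_eq_mul_inv, le_div_iff₀ hb, hprod]
    exact hkey
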